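/- An Artin group whose Coxeter matrix has an entry m_{s,t} with 2 < m_{s,t} < ∞ for some s ≠ t is not biorderable. -/

import Mathlib

def altFree {B : Type*} (s t : B) (m : ℕ) : FreeGroup B :=
  (List.map FreeGroup.of (CoxeterSystem.alternatingWord s t m)).prod

def artinRels {B : Type*} (M : CoxeterMatrix B) : Set (FreeGroup B) :=
  {r | ∃ s t : B, s ≠ t ∧ M s t ≠ 0 ∧
    r = altFree s t (M s t) * (altFree t s (M s t))⁻¹}

abbrev ArtinGroup {B : Type*} (M : CoxeterMatrix B) : Type _ :=
  PresentedGroup (artinRels M)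

open Real Matrix


noncomputable def Amat (c : ℝ) : Matrix (Fin 2) (Fin 2) ℝ := !![-1, -2*c; 2*c, 4*c^2-1]

lemma Amat_sq (c : ℝ) : Amat c * Amat c = (4*c^2-2) • Amat c - 1 := by
  ext i j
  fin_cases i <;> fin_cases j <;>
    simp [Amat, Matrix.mul_apply, Fin.sum_univ_two, Matrix.one_apply] <;> ring

lemma Amat_pow_formula (c : ℝ) (θ : ℝ) (hc : c = Real.cos θ) (n : ℕ) :
    Real.sin (2*θ) • (Amat c ^ (n+1)) =
      Real.sin (2*(n+1)*θ) • Amat c - Real.sin (2*n*θ) • (1 : Matrix (Fin 2) (Fin 2) ℝ) := by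
  induction n with
  | zero => simp
  | succ n ih =>
    have key : Amat c ^ (n+2) = Amat c ^ (n+1) * Amat c := by rw [pow_succ]
    have h2 : Real.sin (2*θ) • (Amat c ^ (n+2))
        = (Real.sin (2*(n+1)*θ) • Amat c - Real.sin (2*n*θ) • 1) * Amat c := by
      rw [key, ← smul_mul_assoc, ih]
    rw [h2, sub_mul, smul_mul_assoc, smul_mul_assoc, Amat_sq, one_mul]
    rw [smul_sub, smul_smul]
    have hT : 4*c^2-2 = 2 * Real.cos (2*θ) := by
      rw [hc, Real.cos_two_mul]; ring
    have e1 : Real.sin (2*(n+1)*θ) * (4*c^2-2) - Real.sin (2*n*θ) = Real.sin (2*(n+2)*θ) := by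
      rw [hT]
      have a1 : (2*(n+2)*θ) = (2*(n+1)*θ) + 2*θ := by push_cast; ring
      have a2 : (2*(n:ℝ)*θ) = (2*((n:ℝ)+1)*θ) - 2*θ := by ring
      rw [a1, Real.sin_add, a2, Real.sin_sub]
      push_cast
      ring
    have e2 : (2*((n:ℝ)+1+1)*θ) = (2*((n:ℝ)+2)*θ) := by ring
    push_cast
    rw [e2, ← e1, sub_smul]
    abel

lemma Amat_pow_eq_one {k : ℕ} (hk : 2 ≤ k) : Amat (Real.cos (π / k)) ^ k = 1 := by
  rcases eq_or_lt_of_le hk with h2 | h3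
  · -- k = 2
    subst h2
    norm_num [Amat]
    ext i j
    fin_cases i <;> fin_cases j <;>
      simp [pow_two, Matrix.mul_apply, Fin.sum_univ_two, Matrix.one_apply]
  · -- k ≥ 3
    set θ := π / k with hθ
    have hkpos : (0:ℝ) < k := by positivity
    have hθpos : 0 < θ := by positivity
    have hθlt : 2*θ < π := by
      rw [hθ, mul_div_assoc', div_lt_iff₀ hkpos]
      have : (2:ℝ) < k := by exact_mod_cast h3
      nlinarith [Real.pi_pos]
    have hsin : Real.sin (2*θ) ≠ 0 := by
      apply ne_of_gt
      apply Real.sin_pos_of_pos_of_lt_pi (by positivity) hθlt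
    obtain ⟨n, rfl⟩ : ∃ n, k = n + 1 := ⟨k - 1, by omega⟩
    have := Amat_pow_formula (Real.cos θ) θ rfl n
    have hkθ : 2*((n:ℝ)+1)*θ = 2*π := by
      rw [hθ]; field_simp; push_cast; ring
    have hkθ' : 2*(n:ℝ)*θ = 2*π - 2*θ := by
      rw [hθ]; field_simp; push_cast; ring
    rw [hkθ, hkθ'] at this
    rw [Real.sin_two_pi] at this
    have : Real.sin (2*θ) • (Amat (Real.cos θ) ^ (n+1)) = Real.sin (2*θ) • (1 : Matrix (Fin 2) (Fin 2) ℝ) := by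
      rw [this]
      have : Real.sin (2*π - 2*θ) = - Real.sin (2*θ) := by
        rw [Real.sin_sub, Real.sin_two_pi, Real.cos_two_pi]; ring
      rw [this]; simp
    exact smul_right_injective _ hsin this


section bridge
variable {B : Type*} [Fintype B] [DecidableEq B]

noncomputable def Pmat (u v : B) : Matrix B (Fin 2) ℝ := fun x i => if x = ![u, v] i then 1 else 0
noncomputable def Qmat (K : B → B → ℝ) (u v : B) : Matrix (Fin 2) B ℝ := fun i y => K (![u, v] i) y

def Gmat (c : ℝ) : Matrix (Fin 2) (Fin 2) ℝ := !![1, -c; -c, 1]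

variable {K : B → B → ℝ} {u v : B} {c : ℝ}

lemma QP_eq (huu : K u u = 1) (huv : K u v = -c) (hvu : K v u = -c) (hvv : K v v = 1) :
    Qmat K u v * Pmat u v = Gmat c := by
  ext i j
  simp only [Matrix.mul_apply, Qmat, Pmat, mul_ite, mul_one, mul_zero,
    Finset.sum_ite_eq', Finset.mem_univ, if_true]
  fin_cases i <;> fin_cases j <;> simp [Gmat, huu, huv, hvu, hvv]

lemma PtP_eq (huv : u ≠ v) : (Pmat u v)ᵀ * Pmat u v = 1 := by
  ext i j
  simp only [Matrix.mul_apply, Matrix.transpose_apply, Pmat, ite_mul, one_mul, zero_mul,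
    mul_ite, mul_one, mul_zero]
  fin_cases i <;> fin_cases j <;>
    simp [Finset.sum_ite_eq', Matrix.one_apply, huv, huv.symm] <;> (rw [Finset.sum_eq_single u] <;> simp_all)

lemma prod_form (C C' : Matrix (Fin 2) (Fin 2) ℝ) :
    (1 + Pmat u v * C * Qmat K u v) * (1 + Pmat u v * C' * Qmat K u v)
      = 1 + Pmat u v * (C + C' + C * (Qmat K u v * Pmat u v) * C') * Qmat K u v := by
  simp only [Matrix.mul_add, Matrix.add_mul, Matrix.one_mul, Matrix.mul_one, Matrix.mul_assoc]
  abel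

lemma pow_form (C₁ Ginv : Matrix (Fin 2) (Fin 2) ℝ)
    (hGinv : Ginv * (Qmat K u v * Pmat u v) = 1) (n : ℕ) :
    (1 + Pmat u v * C₁ * Qmat K u v) ^ n
      = 1 + Pmat u v * (Ginv * ((1 + (Qmat K u v * Pmat u v) * C₁) ^ n - 1)) * Qmat K u v := by
  set G := Qmat K u v * Pmat u v with hGdef
  set A := 1 + G * C₁ with hA
  induction n with
  | zero => simp
  | succ n ih =>
    rw [pow_succ, ih, prod_form]
    congr 2
    have expand : A ^ (n+1) - 1 = (A^n - 1) + G * C₁ + (A^n - 1) * G * C₁ := by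
      rw [pow_succ, hA]; noncomm_ring
    rw [expand, mul_add, mul_add]
    rw [show Ginv * (G * C₁) = (Ginv * G) * C₁ by rw [mul_assoc]]
    rw [show Ginv * ((A^n - 1) * G * C₁) = (Ginv * (A^n - 1)) * G * C₁ by
      simp only [mul_assoc]]
    rw [hGinv, one_mul]

lemma extract_zero (huv : u ≠ v) (Ginv : Matrix (Fin 2) (Fin 2) ℝ)
    (hGinv' : (Qmat K u v * Pmat u v) * Ginv = 1)
    (C : Matrix (Fin 2) (Fin 2) ℝ) (h : Pmat u v * C * Qmat K u v = 0) : C = 0 := by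
  calc C = ((Pmat u v)ᵀ * Pmat u v) * C * ((Qmat K u v * Pmat u v) * Ginv) := by
            rw [PtP_eq huv, hGinv', one_mul, mul_one]
    _ = (Pmat u v)ᵀ * (Pmat u v * C * Qmat K u v) * (Pmat u v * Ginv) := by
            simp only [Matrix.mul_assoc]
    _ = 0 := by rw [h]; simp

end bridge

section bridge2
variable {B : Type*} [Fintype B] [DecidableEq B] {K : B → B → ℝ} {u v : B} {c : ℝ}
lemma QP_apply (i j : Fin 2) :
    (Qmat K u v * Pmat u v) i j = K (![u, v] i) (![u, v] j) := by
  simp only [Matrix.mul_apply, Qmat, Pmat, mul_ite, mul_one, mul_zero,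
    Finset.sum_ite_eq', Finset.mem_univ, if_true]


def Du : Matrix (Fin 2) (Fin 2) ℝ := !![-2, 0; 0, 0]
def Dv : Matrix (Fin 2) (Fin 2) ℝ := !![0, 0; 0, -2]

noncomputable def Smat (K : B → B → ℝ) (w : B) : Matrix B B ℝ :=
  1 + Matrix.vecMulVec (fun x => if x = w then (-2:ℝ) else 0) (K w)

lemma Smat_form_left (u v : B) : Smat K u = 1 + Pmat u v * Du * Qmat K u v := by
  unfold Smat
  congr 1
  ext x y
  simp [Matrix.mul_apply, Pmat, Qmat, Du, Matrix.vecMulVec_apply, Fin.sum_univ_two,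
    Matrix.cons_val_zero, Matrix.cons_val_one]
  by_cases hx : x = u <;> simp [hx]

lemma Smat_form_right (u v : B) : Smat K v = 1 + Pmat u v * Dv * Qmat K u v := by
  unfold Smat
  congr 1
  ext x y
  simp [Matrix.mul_apply, Pmat, Qmat, Dv, Matrix.vecMulVec_apply, Fin.sum_univ_two]
  by_cases hx : x = u <;> simp [hx]

lemma Smat_sq (hww : K w w = 1) : Smat K w * Smat K w = 1 := by
  rw [Smat_form_left w w, prod_form]
  have hcoef : Du + Du + Du * (Qmat K w w * Pmat w w) * Du = 0 := by
    have h11 : ∑ j : B, Qmat K w w 0 j * Pmat w w j 0 = 1 := by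
      have h := QP_apply (K := K) (u := w) (v := w) (0 : Fin 2) 0
      rw [Matrix.mul_apply] at h
      rw [h]; simpa using hww
    ext i j
    fin_cases i <;> fin_cases j <;>
        simp [Du, Matrix.mul_apply, Matrix.vecMul, dotProduct, Fin.sum_univ_two, h11] <;>
      norm_num
  rw [hcoef]
  simp
end bridge2

noncomputable def GmatInv (c : ℝ) : Matrix (Fin 2) (Fin 2) ℝ := (1 - c^2)⁻¹ • !![1, c; c, 1]

noncomputable def C1 (c : ℝ) : Matrix (Fin 2) (Fin 2) ℝ := Du + Dv + Du * Gmat c * Dv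

lemma Amat_eq (c : ℝ) : 1 + Gmat c * C1 c = Amat c := by
  ext i j
  fin_cases i <;> fin_cases j <;>
    simp [Amat, Gmat, C1, Du, Dv, Matrix.mul_apply, Fin.sum_univ_two, Matrix.one_apply] <;> ring

lemma GmatInv_mul (c : ℝ) (hc : c^2 ≠ 1) : GmatInv c * Gmat c = 1 := by
  have h : 1 - c^2 ≠ 0 := by intro h; apply hc; nlinarith
  ext i j
  fin_cases i <;> fin_cases j <;>
    simp [GmatInv, Gmat, Matrix.mul_apply, Fin.sum_univ_two, Matrix.one_apply] <;>
    field_simp <;> ring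
lemma mul_GmatInv (c : ℝ) (hc : c^2 ≠ 1) : Gmat c * GmatInv c = 1 := by
  have h : 1 - c^2 ≠ 0 := by intro h; apply hc; nlinarith
  ext i j
  fin_cases i <;> fin_cases j <;>
    simp [GmatInv, Gmat, Matrix.mul_apply, Fin.sum_univ_two, Matrix.one_apply] <;>
    field_simp <;> ring

lemma Amat_sq_00 (c : ℝ) : (Amat c * Amat c) 0 0 = 1 - 4*c^2 := by
  simp [Amat, Matrix.mul_apply, Fin.sum_univ_two]; ring

lemma cos_bounds {k : ℕ} (hk : 2 ≤ k) : 0 ≤ Real.cos (π / k) ∧ Real.cos (π / k) ^ 2 ≠ 1 := by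
  have hkpos : (0:ℝ) < k := by positivity
  have h1 : 0 < π / k := by positivity
  have h2 : π / k ≤ π / 2 := by
    apply div_le_div_of_nonneg_left Real.pi_pos.le (by norm_num)
    exact_mod_cast hk
  constructor
  · apply Real.cos_nonneg_of_mem_Icc
    constructor <;> nlinarith [Real.pi_pos]
  · have hlt : Real.cos (π / k) < 1 := by
      rcases lt_or_eq_of_le (Real.cos_le_one (π / k)) with h | h
      · exact h
      · exfalso
        have hz := (Real.cos_eq_one_iff_of_lt_of_lt (x := π / k)
          (by nlinarith [Real.pi_pos]) (by nlinarith [Real.pi_pos])).mp h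
        nlinarith [Real.pi_pos]
    have hge : 0 ≤ Real.cos (π / k) := by
      apply Real.cos_nonneg_of_mem_Icc
      constructor <;> nlinarith [Real.pi_pos]
    nlinarith

lemma cos_ge_half {k : ℕ} (hk : 3 ≤ k) : (1:ℝ)/2 ≤ Real.cos (π / k) := by
  have hkpos : (0:ℝ) < k := by positivity
  have h3 : (3:ℝ) ≤ k := by exact_mod_cast hk
  have h2 : π / k ≤ π / 3 := by
    apply div_le_div_of_nonneg_left Real.pi_pos.le (by norm_num) h3
  calc (1:ℝ)/2 = Real.cos (π / 3) := Real.cos_pi_div_three.symm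
    _ ≤ Real.cos (π / k) :=
        Real.cos_le_cos_of_nonneg_of_le_pi (by positivity) (by nlinarith [Real.pi_pos]) h2


lemma altprod_formula {B : Type*} {Mo : Type*} [Monoid Mo] (g : B → Mo) (u v : B) (n : ℕ) :
    (List.map g (CoxeterSystem.alternatingWord u v n)).prod
      = (if Even n then 1 else g v) * (g u * g v) ^ (n / 2) := by
  induction n with
  | zero => simp [CoxeterSystem.alternatingWord]
  | succ n ih =>
    rw [CoxeterSystem.alternatingWord_succ', List.map_cons, List.prod_cons, ih]
    rcases Nat.even_or_odd n with he | ho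
    · have h1 : ¬ Even (n+1) := by simp [Nat.even_add_one, he]
      have h2 : (n+1)/2 = n/2 := by obtain ⟨j, rfl⟩ := he; omega
      simp [he, h1, h2]
    · have hno : ¬ Even n := by obtain ⟨j, rfl⟩ := ho; intro h; obtain ⟨l, hl⟩ := h; omega
      have he1 : Even (n+1) := Nat.even_add_one.mpr hno
      have h2 : (n+1)/2 = n/2 + 1 := by obtain ⟨j, rfl⟩ := ho; omega
      rw [if_neg hno, if_pos he1, h2, one_mul, pow_succ', ← mul_assoc, if_neg hno]

lemma braid_of_pow {G : Type*} [Group G] {X Y : G} (k : ℕ)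
    (hX : X * X = 1) (hY : Y * Y = 1) (hk : (X * Y) ^ k = 1) :
    (if Even k then 1 else Y) * (X * Y) ^ (k / 2)
      = (if Even k then 1 else X) * (Y * X) ^ (k / 2) := by
  have hXinv : X⁻¹ = X := by rw [inv_eq_iff_mul_eq_one, hX]
  have hYinv : Y⁻¹ = Y := by rw [inv_eq_iff_mul_eq_one, hY]
  have hYX : Y * X = (X * Y)⁻¹ := by rw [_root_.mul_inv_rev, hXinv, hYinv]
  rcases Nat.even_or_odd k with ⟨j, hj⟩ | ⟨j, hj⟩
  · subst hj
    have hj2 : (j + j) / 2 = j := by omega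
    have hev : Even (j + j) := ⟨j, rfl⟩
    simp only [if_pos hev, one_mul, hj2, hYX, inv_pow]
    rw [eq_inv_iff_mul_eq_one, ← pow_add]
    exact hk
  · subst hj
    have hne : ¬ Even (2*j+1) := by intro h; obtain ⟨l, hl⟩ := h; omega
    have hj2 : (2*j+1) / 2 = j := by omega
    simp only [if_neg hne, hj2, hYX, inv_pow]
    have hpow : ((X*Y) ^ j)⁻¹ = (X*Y) ^ (j+1) := by
      rw [inv_eq_iff_mul_eq_one, ← pow_add]
      have : j + (j+1) = 2*j+1 := by omega
      rw [this, hk]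
    rw [hpow, pow_succ', ← mul_assoc, ← mul_assoc, hX, one_mul]

lemma pow_eq_of_braid {G : Type*} [Group G] {X Y : G} (m : ℕ)
    (h : (if Even m then 1 else Y) * (X * Y) ^ (m / 2)
      = (if Even m then 1 else X) * (Y * X) ^ (m / 2)) :
    (X * Y) ^ m = (Y * X) ^ m := by
  have sc : ∀ (a b : G) (n : ℕ), a * (b * a) ^ n = (a * b) ^ n * a := by
    intro a b n
    have : SemiconjBy a (b * a) (a * b) := by unfold SemiconjBy; rw [← mul_assoc]
    exact (this.pow_right n)
  rcases Nat.even_or_odd m with ⟨j, hj⟩ | ⟨j, hj⟩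
  · subst hj
    have hj2 : (j + j) / 2 = j := by omega
    have hev : Even (j + j) := ⟨j, rfl⟩
    simp only [if_pos hev, one_mul, hj2] at h
    rw [pow_add, pow_add, h]
  · subst hj
    have hne : ¬ Even (2*j+1) := by intro h'; obtain ⟨l, hl⟩ := h'; omega
    have hj2 : (2*j+1) / 2 = j := by omega
    simp only [if_neg hne, hj2] at h
    have c1 : (X * Y) ^ (2*j+1) = (X * (Y*X)^j) * (Y * (X*Y)^j) := by
      rw [show X * (Y*X)^j * (Y * (X*Y)^j) = (X * (Y*X)^j * Y) * (X*Y)^j by group]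
      rw [sc X Y j]
      rw [show (X*Y)^j * X * Y = (X*Y)^(j+1) by rw [pow_succ, mul_assoc]]
      rw [← pow_add]
      congr 1
      omega
    have c2 : (Y * X) ^ (2*j+1) = (Y * (X*Y)^j) * (X * (Y*X)^j) := by
      rw [show Y * (X*Y)^j * (X * (Y*X)^j) = (Y * (X*Y)^j * X) * (Y*X)^j by group]
      rw [sc Y X j]
      rw [show (Y*X)^j * Y * X = (Y*X)^(j+1) by rw [pow_succ, mul_assoc]]
      rw [← pow_add]
      congr 1
      omega
    rw [c1, c2, h]

section glue
variable {B : Type*} [Fintype B] [DecidableEq B] (M : CoxeterMatrix B)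

noncomputable def Kmat (M : CoxeterMatrix B) : B → B → ℝ :=
  fun x y => -Real.cos (π / (M x y : ℕ))

lemma Kmat_diag (w : B) : Kmat M w w = 1 := by
  simp [Kmat, M.diagonal w]

section pair
variable {u v : B}

lemma pair_two_le (huv : u ≠ v) (hk0 : M u v ≠ 0) : 2 ≤ M u v := by
  have h1 := M.off_diagonal u v huv
  omega

lemma Kmat_uv : Kmat M u v = -Real.cos (π / (M u v : ℕ)) := rfl
lemma Kmat_vu : Kmat M v u = -Real.cos (π / (M u v : ℕ)) := by
  rw [Kmat, M.symmetric v u]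

lemma Smat_mul_form :
    Smat (Kmat M) u * Smat (Kmat M) v
      = 1 + Pmat u v * C1 (Real.cos (π / (M u v : ℕ))) * Qmat (Kmat M) u v := by
  rw [Smat_form_left u v, Smat_form_right u v, prod_form,
    QP_eq (Kmat_diag M u) (Kmat_uv M) (Kmat_vu M) (Kmat_diag M v)]
  rfl

lemma Smat_pair_pow (huv : u ≠ v) (hk0 : M u v ≠ 0) :
    (Smat (Kmat M) u * Smat (Kmat M) v) ^ (M u v) = 1 := by
  have h2 := pair_two_le M huv hk0
  set c := Real.cos (π / (M u v : ℕ)) with hc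
  have hc2 : c^2 ≠ 1 := (cos_bounds h2).2
  have hQP : Qmat (Kmat M) u v * Pmat u v = Gmat c :=
    QP_eq (Kmat_diag M u) (Kmat_uv M) (Kmat_vu M) (Kmat_diag M v)
  rw [Smat_mul_form M, pow_form (C1 c) (GmatInv c) (by rw [hQP]; exact GmatInv_mul c hc2)]
  rw [hQP, Amat_eq c, Amat_pow_eq_one h2, sub_self, Matrix.mul_zero]
  simp

lemma Smat_noncomm (huv : u ≠ v) (h3 : 3 ≤ M u v)
    (h : Smat (Kmat M) u * Smat (Kmat M) v = Smat (Kmat M) v * Smat (Kmat M) u) : False := by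
  set c := Real.cos (π / (M u v : ℕ)) with hc
  have h2 : 2 ≤ M u v := by omega
  have hc2 : c^2 ≠ 1 := (cos_bounds h2).2
  have hQP : Qmat (Kmat M) u v * Pmat u v = Gmat c :=
    QP_eq (Kmat_diag M u) (Kmat_uv M) (Kmat_vu M) (Kmat_diag M v)
  have hsq : (Smat (Kmat M) u * Smat (Kmat M) v) ^ 2 = 1 := by
    rw [pow_two]
    calc Smat (Kmat M) u * Smat (Kmat M) v * (Smat (Kmat M) u * Smat (Kmat M) v)
        = Smat (Kmat M) u * Smat (Kmat M) v * (Smat (Kmat M) v * Smat (Kmat M) u) := by rw [← h]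
      _ = Smat (Kmat M) u * ((Smat (Kmat M) v * Smat (Kmat M) v) * Smat (Kmat M) u) := by
            simp only [Matrix.mul_assoc]
      _ = 1 := by rw [Smat_sq (Kmat_diag M v), Matrix.one_mul, Smat_sq (Kmat_diag M u)]
  rw [Smat_mul_form M, pow_form (C1 c) (GmatInv c) (by rw [hQP]; exact GmatInv_mul c hc2),
    hQP, Amat_eq c] at hsq
  have hzero : Pmat u v * (GmatInv c * (Amat c ^ 2 - 1)) * Qmat (Kmat M) u v = 0 := by
    have := hsq
    rw [add_eq_left] at this
    exact this
  have hC : GmatInv c * (Amat c ^ 2 - 1) = 0 :=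
    extract_zero huv (GmatInv c) (by rw [hQP]; exact mul_GmatInv c hc2) _ hzero
  have hA : Amat c ^ 2 - 1 = 0 := by
    calc Amat c ^ 2 - 1 = (Gmat c * GmatInv c) * (Amat c ^ 2 - 1) := by
          rw [mul_GmatInv c hc2, Matrix.one_mul]
      _ = Gmat c * (GmatInv c * (Amat c ^ 2 - 1)) := by rw [Matrix.mul_assoc]
      _ = 0 := by rw [hC, Matrix.mul_zero]
  have hA1 : Amat c * Amat c = 1 := by
    have : Amat c ^ 2 = 1 := by rwa [sub_eq_zero] at hA
    rwa [pow_two] at this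
  have h00 := Amat_sq_00 c
  rw [hA1, Matrix.one_apply_eq] at h00
  have hchalf : (1:ℝ)/2 ≤ c := cos_ge_half h3
  nlinarith

end pair
end glue

lemma biorder_aux {G : Type*} [Group G] {a b : G} {m : ℕ} (hm : 1 ≤ m)
    (hab : a ≠ b) (hpow : a ^ m = b ^ m)
    (r : G → G → Prop) (hlin : IsLinearOrder G r)
    (hbi : ∀ x y c d : G, r x y → r (c * x * d) (c * y * d)) : False := by
  haveI := hlin
  have key : ∀ x y : G, x ^ m = y ^ m → r x y → x = y := by
    intro x y hxy hr
    have powm : ∀ k : ℕ, r (x ^ k) (y ^ k) := by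
      intro k
      induction k with
      | zero => simpa using (Std.Refl.refl (r := r) 1)
      | succ k ih =>
        have h1 : r (x ^ k * x * 1) (x ^ k * y * 1) := hbi x y (x ^ k) 1 hr
        have h2 : r (1 * x ^ k * y) (1 * y ^ k * y) := hbi _ _ 1 y ih
        simp only [mul_one, one_mul] at h1 h2
        have := IsTrans.trans (r := r) _ _ _ h1 h2
        rw [pow_succ, pow_succ]
        exact this
    have h1 : r (x ^ (m-1) * x * 1) (x ^ (m-1) * y * 1) := hbi x y (x ^ (m-1)) 1 hr
    have h2 : r (1 * x ^ (m-1) * y) (1 * y ^ (m-1) * y) := hbi _ _ 1 y (powm (m-1))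
    simp only [mul_one, one_mul] at h1 h2
    have e : x ^ (m-1) * x = x ^ m := by rw [← pow_succ]; congr 1; omega
    have e' : y ^ (m-1) * y = y ^ m := by rw [← pow_succ]; congr 1; omega
    rw [e] at h1
    rw [e', ← hxy] at h2
    have heq : x ^ (m-1) * y = x ^ m := Std.Antisymm.antisymm (r := r) _ _ h2 h1
    rw [← e] at heq
    exact (mul_left_cancel heq).symm
  rcases Std.Total.total (r := r) a b with h | h
  · exact hab (key a b hpow h)
  · exact hab ((key b a hpow.symm h).symm)

/-- An Artin group having an entry `2 < m_{s,t} < ∞` admits no bi-invariant linear order. -/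
theorem stmt2 {B : Type*} [Fintype B] (M : CoxeterMatrix B)
    (h : ∃ s t : B, s ≠ t ∧ 2 < M s t) :
    ¬ ∃ r : ArtinGroup M → ArtinGroup M → Prop, IsLinearOrder (ArtinGroup M) r ∧
      ∀ a b c d : ArtinGroup M, r a b → r (c * a * d) (c * b * d) := by
  classical
  obtain ⟨s, t, hst, hm⟩ := h
  rintro ⟨r, hlin, hbi⟩
  have hm0 : M s t ≠ 0 := by omega
  set X : ArtinGroup M := PresentedGroup.of s with hX
  set Y : ArtinGroup M := PresentedGroup.of t with hY
  -- the group-level braid relation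
  have hmk : ∀ (u v : B) (n : ℕ),
      ((QuotientGroup.mk (altFree u v n) : ArtinGroup M))
        = (if Even n then 1 else (PresentedGroup.of v : ArtinGroup M))
            * (PresentedGroup.of u * PresentedGroup.of v) ^ (n / 2) := by
    intro u v n
    have : ((QuotientGroup.mk (altFree u v n) : ArtinGroup M))
        = (QuotientGroup.mk' (Subgroup.normalClosure (artinRels M))) (altFree u v n) := rfl
    rw [this]
    unfold altFree
    rw [map_list_prod, List.map_map]
    exact altprod_formula _ u v n
  have hrel : (QuotientGroup.mk (altFree s t (M s t) * (altFree t s (M s t))⁻¹) : ArtinGroup M) = 1 := by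
    rw [QuotientGroup.eq_one_iff]
    exact Subgroup.subset_normalClosure ⟨s, t, hst, hm0, rfl⟩
  have hbraid : (if Even (M s t) then 1 else Y) * (X * Y) ^ (M s t / 2)
      = (if Even (M s t) then 1 else X) * (Y * X) ^ (M s t / 2) := by
    have := hrel
    rw [QuotientGroup.mk_mul, QuotientGroup.mk_inv, mul_inv_eq_one] at this
    rw [hmk, hmk] at this
    exact this
  have hpow : (X * Y) ^ (M s t) = (Y * X) ^ (M s t) := pow_eq_of_braid _ hbraid
  -- X*Y ≠ Y*X via the reflection representation
  have hne : X * Y ≠ Y * X := by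
    intro heq
    -- units of the matrix ring
    let f : B → (Matrix B B ℝ)ˣ := fun w =>
      ⟨Smat (Kmat M) w, Smat (Kmat M) w, Smat_sq (Kmat_diag M w), Smat_sq (Kmat_diag M w)⟩
    have hlift : ∀ rr ∈ artinRels M, (FreeGroup.lift f) rr = 1 := by
      rintro rr ⟨u, v, huv, hk0, rfl⟩
      rw [_root_.map_mul, map_inv, mul_inv_eq_one]
      have hform : ∀ (u' v' : B) (n : ℕ), (FreeGroup.lift f) (altFree u' v' n)
          = (if Even n then 1 else f v') * (f u' * f v') ^ (n / 2) := by
        intro u' v' n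
        unfold altFree
        rw [map_list_prod, List.map_map]
        have : (FreeGroup.lift f) ∘ FreeGroup.of = f := by
          funext w; simp
        rw [this]
        exact altprod_formula f u' v' n
      rw [hform u v (M u v), hform v u (M u v)]
      apply braid_of_pow
      · exact Units.ext (Smat_sq (Kmat_diag M u))
      · exact Units.ext (Smat_sq (Kmat_diag M v))
      · exact Units.ext (by
          push_cast
          exact Smat_pair_pow M huv hk0)
    let φ : ArtinGroup M →* (Matrix B B ℝ)ˣ := PresentedGroup.toGroup hlift
    have := congrArg φ heq
    rw [hX, hY, _root_.map_mul, _root_.map_mul, PresentedGroup.toGroup.of, PresentedGroup.toGroup.of] at this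
    have hmat : Smat (Kmat M) s * Smat (Kmat M) t = Smat (Kmat M) t * Smat (Kmat M) s := by
      have := congrArg Units.val this
      push_cast at this
      exact this
    exact Smat_noncomm M hst (by omega) hmat
  exact biorder_aux (by omega : 1 ≤ M s t) hne hpow r hlin hbi
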